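/- arXiv:1410.0732 — 3 statements merged into one kernel-verified Lean document; each statement's English description precedes it below -/
import Mathlib

section
/- Let (R, m, k) be a commutative Noetherian local non-Gorenstein ring with m^3 = 0 and m^2 ≠ 0, and let M be a finitely generated R-module. If for some n ≥ 0 the n-th syzygy Ω^n_R(M) of M in a minimal free resolution contains a copy of the residue field k as a direct summand (i.e., Ω^n_R(M) ≅ k ⊕ X for some R-module X), then M is not totally reflexive. -/
open CategoryTheory IsLocalRing

/-- The `i`-th Ext module `Ext^i_R(M, N)`. -/
noncomputable def extMod (R : Type) [CommRing R] (M N : Type) [AddCommGroup M] [Module R M]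
    [AddCommGroup N] [Module R N] (i : ℕ) : ModuleCat R :=
  ((Ext R (ModuleCat R) i).obj (Opposite.op (ModuleCat.of R M))).obj (ModuleCat.of R N)

/-- A finitely generated module `M` over a commutative ring `R` is totally reflexive if the
biduality map `M → Hom_R(Hom_R(M,R),R)` is an isomorphism and
`Ext^i_R(M,R) = 0 = Ext^i_R(Hom_R(M,R),R)` for all `i > 0`. -/
def IsTotallyReflexive (R : Type) [CommRing R] (M : Type) [AddCommGroup M] [Module R M] : Prop :=
  Module.Finite R M ∧
  Function.Bijective (Module.Dual.eval R M) ∧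
  (∀ i : ℕ, 0 < i → Subsingleton (extMod R M R i)) ∧
  (∀ i : ℕ, 0 < i → Subsingleton (extMod R (Module.Dual R M) R i))

open Limits

lemma factor_surj {R A B C : Type} [CommRing R] [AddCommGroup A] [Module R A]
    [AddCommGroup B] [Module R B] [AddCommGroup C] [Module R C]
    (s : A →ₗ[R] B) (t : A →ₗ[R] C)
    (hs : Function.Surjective s) (h : LinearMap.ker s ≤ LinearMap.ker t) :
    ∃ σ : B →ₗ[R] C, ∀ y, σ (s y) = t y := by
  refine ⟨(Submodule.liftQ (LinearMap.ker s) t h).comp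
    ((LinearMap.quotKerEquivOfSurjective s hs).symm.toLinearMap), fun y => ?_⟩
  have h1 : (LinearMap.quotKerEquivOfSurjective s hs).symm (s y)
      = Submodule.Quotient.mk y := by
    rw [LinearEquiv.symm_apply_eq]
    rfl
  simp [h1]


section Resolution
variable (R : Type) [CommRing R]
    (M : Type) [AddCommGroup M] [Module R M]
    (rk : ℕ → ℕ)
    (d : (i : ℕ) → ((Fin (rk (i + 1)) → R) →ₗ[R] (Fin (rk i) → R)))
    (ε : (Fin (rk 0) → R) →ₗ[R] M)
    (hε : Function.Surjective ε)
    (hexact0 : LinearMap.range (d 0) = LinearMap.ker ε)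
    (hexact : ∀ i : ℕ, LinearMap.range (d (i + 1)) = LinearMap.ker (d i))

-- assume resCpx, resCpx_d, resPR from t2 (inline here)
noncomputable def resCpx : ChainComplex (ModuleCat R) ℕ :=
  ChainComplex.of (fun i => ModuleCat.of R (Fin (rk i) → R)) (fun i => ModuleCat.ofHom (d i))
    (fun i => by
      refine ModuleCat.hom_ext (LinearMap.ext fun x => ?_)
      have : (d (i+1)) x ∈ LinearMap.ker (d i) := by
        rw [← hexact i]; exact ⟨x, rfl⟩
      exact this)

lemma resCpx_d (i : ℕ) : (resCpx R rk d hexact).d (i+1) i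
    = ModuleCat.ofHom (d i : (Fin (rk (i+1)) → R) →ₗ[R] (Fin (rk i) → R)) :=
  by unfold resCpx; exact ChainComplex.of_d (fun i => ModuleCat.of R (Fin (rk i) → R)) (fun i => ModuleCat.ofHom (d i)) i


noncomputable def resPR : ProjectiveResolution (ModuleCat.of R M) where
  complex := resCpx R rk d hexact
  projective n := by
    dsimp [resCpx]
    exact (IsProjective.iff_projective _).mp inferInstance
  π := (ChainComplex.toSingle₀Equiv _ _).symm
    ⟨(ModuleCat.ofHom ε : (resCpx R rk d hexact).X 0 ⟶ ModuleCat.of R M), by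
      rw [resCpx_d R rk d hexact 0]
      refine ModuleCat.hom_ext (LinearMap.ext fun x => ?_)
      have : (d 0) x ∈ LinearMap.ker ε := by rw [← hexact0]; exact ⟨x, rfl⟩
      exact this⟩
  quasiIso := ⟨fun n => by
    cases n with
    | zero =>
      rw [ChainComplex.quasiIsoAt₀_iff, ShortComplex.quasiIso_iff_of_zeros']
      · have w : ModuleCat.ofHom (d 0) ≫ ModuleCat.ofHom ε = (0 : ModuleCat.of R (Fin (rk 1) → R) ⟶ ModuleCat.of R M) := by
          refine ModuleCat.hom_ext (LinearMap.ext fun x => ?_)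
          have : (d 0) x ∈ LinearMap.ker ε := by rw [← hexact0]; exact ⟨x, rfl⟩
          exact this
        have hS : (ShortComplex.mk _ _ w).Exact ∧ Epi (ShortComplex.mk _ _ w).g := by
          constructor
          · rw [ShortComplex.moduleCat_exact_iff_range_eq_ker]
            exact hexact0
          · exact (ModuleCat.epi_iff_surjective _).2 hε
        refine (ShortComplex.exact_and_epi_g_iff_of_iso ?_).2 hS
        refine ShortComplex.isoMk (Iso.refl _) (Iso.refl _) (Iso.refl _) ?_ ?_
        · simp only [Category.id_comp, Category.comp_id]
          exact (resCpx_d R rk d hexact 0).symm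
        · dsimp
          simp [ChainComplex.toSingle₀Equiv_symm_apply_f_zero]
          rfl
      all_goals rfl
    | succ n =>
      rw [quasiIsoAt_iff_exactAt']
      · rw [HomologicalComplex.exactAt_iff' _ (n+2) (n+1) n (by simp) (by simp)]
        rw [ShortComplex.moduleCat_exact_iff_range_eq_ker]
        change LinearMap.range ((resCpx R rk d hexact).d (n+1+1) (n+1)).hom
          = LinearMap.ker ((resCpx R rk d hexact).d (n+1) n).hom
        rw [resCpx_d R rk d hexact (n+1), resCpx_d R rk d hexact n]
        exact hexact n
      · apply ChainComplex.exactAt_succ_single_obj⟩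

include ε hε hexact0 hexact in
lemma dual_exact (j : ℕ)
    (hsub : Subsingleton (extMod R M R (j+1)))
    (φ : (Fin (rk (j+1)) → R) →ₗ[R] R) (hφ : φ.comp (d (j+1)) = 0) :
    ∃ ψ : (Fin (rk j) → R) →ₗ[R] R, φ = ψ.comp (d j) := by
  set P := resPR R M rk d ε hε hexact0 hexact with hPdef
  have h1 : IsZero (extMod R M R (j+1)) := ModuleCat.isZero_of_subsingleton _
  have hzero : IsZero (((P.complex.linearYonedaObj R (ModuleCat.of R R)).homology (j+1))) :=
    IsZero.of_iso h1 (P.isoExt (j+1) (ModuleCat.of R R)).symm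
  have hex : (P.complex.linearYonedaObj R (ModuleCat.of R R)).ExactAt (j+1) := by
    rw [HomologicalComplex.exactAt_iff_isZero_homology]
    exact hzero
  rw [HomologicalComplex.exactAt_iff' _ j (j+1) (j+2) (by simp) (by simp)] at hex
  rw [ShortComplex.moduleCat_exact_iff_range_eq_ker] at hex
  have hd2 : P.complex.d (j+2) (j+1)
      = ModuleCat.ofHom (d (j+1) : (Fin (rk (j+2)) → R) →ₗ[R] (Fin (rk (j+1)) → R)) :=
    resCpx_d R rk d hexact (j+1)
  have hd1 : P.complex.d (j+1) j
      = ModuleCat.ofHom (d j : (Fin (rk (j+1)) → R) →ₗ[R] (Fin (rk j) → R)) :=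
    resCpx_d R rk d hexact j
  let φ' : P.complex.X (j+1) ⟶ ModuleCat.of R R := ModuleCat.ofHom φ
  have hmem : φ' ∈
      LinearMap.ker ((P.complex.linearYonedaObj R (ModuleCat.of R R)).sc' j (j+1) (j+2)).g.hom := by
    show P.complex.d (j+2) (j+1) ≫ φ' = 0
    rw [hd2]
    exact ModuleCat.hom_ext hφ
  rw [← hex] at hmem
  obtain ⟨ψ, hψ⟩ := hmem
  refine ⟨ψ.hom, ?_⟩
  have : ((P.complex.linearYonedaObj R (ModuleCat.of R R)).sc' j (j+1) (j+2)).f.hom ψ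
      = P.complex.d (j+1) j ≫ (ψ : P.complex.X j ⟶ ModuleCat.of R R) := rfl
  rw [this, hd1] at hψ
  exact (congrArg ModuleCat.Hom.hom hψ).symm


section Part2
variable (R : Type) [CommRing R] [IsLocalRing R]

lemma extend_from_max
    (Ω : Type) [AddCommGroup Ω] [Module R Ω] (X : Type) [AddCommGroup X] [Module R X]
    (eqv : Ω ≃ₗ[R] (ResidueField R × X))
    (a : ℕ) {F₁ F₂ : Type} [AddCommGroup F₁] [Module R F₁] [AddCommGroup F₂] [Module R F₂]
    (s : (Fin a → R) →ₗ[R] Ω) (hs : Function.Surjective s)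
    (δ : F₁ →ₗ[R] (Fin a → R)) (hδ : LinearMap.range δ = LinearMap.ker s)
    (δ' : F₂ →ₗ[R] F₁) (hdd : δ.comp δ' = 0)
    (hex : ∀ φ : F₁ →ₗ[R] R, φ.comp δ' = 0 → ∃ ψ : (Fin a → R) →ₗ[R] R, φ = ψ.comp δ)
    (f : (maximalIdeal R) →ₗ[R] R) :
    ∃ g : R →ₗ[R] R, ∀ x : maximalIdeal R, g x = f x := by
  classical
  set k := ResidueField R
  set π : R →ₗ[R] k := (maximalIdeal R).mkQ with hπdef
  have hπsurj : Function.Surjective π := Submodule.mkQ_surjective _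
  have hπ0 : ∀ x : R, x ∈ maximalIdeal R → π x = 0 := fun x hx =>
    (Submodule.Quotient.mk_eq_zero _).2 hx
  have hπker : ∀ x : R, π x = 0 → x ∈ maximalIdeal R := fun x hx =>
    (Submodule.Quotient.mk_eq_zero _).1 hx
  set e : Ω →ₗ[R] k := (LinearMap.fst R k X).comp eqv.toLinearMap with he
  set jm : k →ₗ[R] Ω := eqv.symm.toLinearMap.comp (LinearMap.inl R k X) with hjm
  have hej : ∀ x, e (jm x) = x := by intro x; simp [he, hjm]
  -- pushout E
  set W : Submodule R (R × R) :=
    LinearMap.range (((maximalIdeal R).subtype).prod (-f)) with hW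
  set q : (R × R) →ₗ[R] ((R × R) ⧸ W) := W.mkQ with hq
  have hpE0 : ∀ w ∈ W, (π.comp (LinearMap.fst R R R)) w = 0 := by
    rintro w ⟨b, rfl⟩
    exact hπ0 _ b.2
  set pE : ((R × R) ⧸ W) →ₗ[R] k := Submodule.liftQ W (π.comp (LinearMap.fst R R R)) hpE0
    with hpE
  set ιE : R →ₗ[R] ((R × R) ⧸ W) := q.comp (LinearMap.inr R R R) with hιE
  have hkey : ∀ (x : R) (hx : x ∈ maximalIdeal R), q (x, 0) = ιE (f ⟨x, hx⟩) := by
    intro x hx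
    have : ((x : R), -f ⟨x, hx⟩) ∈ W := ⟨⟨x, hx⟩, rfl⟩
    have h0 : q ((x : R), -f ⟨x, hx⟩) = 0 := (Submodule.Quotient.mk_eq_zero _).2 this
    have : q ((x, 0) : R × R) - q (0, f ⟨x, hx⟩) = q ((x : R), -f ⟨x, hx⟩) := by
      rw [← map_sub]
      congr 1
      simp [Prod.ext_iff]
    rw [h0] at this
    have := sub_eq_zero.mp this
    simpa [hιE] using this
  have hpEιE : ∀ x, pE (ιE x) = 0 := by
    intro x
    simp [hpE, hιE, hq]
    exact (Submodule.liftQ_apply _ _ _).trans (by simp)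
  have hιEinj : Function.Injective ιE := by
    rw [injective_iff_map_eq_zero]
    intro x hx
    have : ((0 : R), x) ∈ W := (Submodule.Quotient.mk_eq_zero _).1 hx
    obtain ⟨b, hb⟩ := this
    have hb1 : (b : R) = 0 := congrArg Prod.fst hb
    have hb0 : b = 0 := Subtype.ext hb1
    have hb2 : -f b = x := congrArg Prod.snd hb
    rw [hb0] at hb2
    simpa using hb2.symm
  have hpEker : ∀ z, pE z = 0 → ∃ x, ιE x = z := by
    intro z hz
    obtain ⟨⟨r₁, r₂⟩, rfl⟩ := Submodule.mkQ_surjective W z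
    have hr₁ : r₁ ∈ maximalIdeal R := hπker _ hz
    refine ⟨f ⟨r₁, hr₁⟩ + r₂, ?_⟩
    have : ((r₁, r₂) : R × R) = (r₁, 0) + (0, r₂) := by simp
    rw [map_add, show (Submodule.mkQ W) ((r₁, r₂) : R × R) = q (r₁, r₂) from rfl, this,
      map_add, hkey r₁ hr₁]
    simp [hιE]
  -- lift e ∘ s through π
  obtain ⟨u, hu⟩ := Module.projective_lifting_property π (e.comp s) hπsurj
  have huδ : ∀ y : F₁, u (δ y) ∈ maximalIdeal R := by
    intro y
    apply hπker
    have h1 : δ y ∈ LinearMap.ker s := hδ ▸ LinearMap.mem_range_self δ y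
    have h2 : π (u (δ y)) = e (s (δ y)) := by
      have := LinearMap.congr_fun hu (δ y); simpa using this
    rw [h2, LinearMap.mem_ker.mp h1, map_zero]
  set φ : F₁ →ₗ[R] R := f.comp ((u.comp δ).codRestrict (maximalIdeal R) huδ) with hφdef
  have hφδ' : φ.comp δ' = 0 := by
    ext x
    have hδδ' : δ (δ' x) = 0 := LinearMap.congr_fun hdd x
    have : ((u.comp δ).codRestrict (maximalIdeal R) huδ) (δ' x) = 0 := by
      apply Subtype.ext
      simp [hδδ']
    simp [hφdef, this]
  obtain ⟨ψ, hψ⟩ := hex φ hφδ'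
  -- corrected lift t'
  set tE : (Fin a → R) →ₗ[R] ((R × R) ⧸ W) :=
    (q.comp (LinearMap.inl R R R)).comp u - ιE.comp ψ with htE
  set t' : (Fin a → R) →ₗ[R] (((R × R) ⧸ W) × Ω) := tE.prod s with ht'
  have ht'ker : LinearMap.ker s ≤ LinearMap.ker t' := by
    intro y hy
    rw [← hδ] at hy
    obtain ⟨z, rfl⟩ := hy
    have h1 : tE (δ z) = 0 := by
      have : q (u (δ z), 0) = ιE (f ⟨u (δ z), huδ z⟩) := hkey _ (huδ z)
      have hψz : ψ (δ z) = f ⟨u (δ z), huδ z⟩ := by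
        have := LinearMap.congr_fun hψ z
        exact this.symm
      simp only [htE, LinearMap.sub_apply, LinearMap.comp_apply, LinearMap.inl_apply]
      rw [hψz, ← this]
      exact sub_eq_zero.mpr rfl
    have h2 : s (δ z) = 0 := by
      have : δ z ∈ LinearMap.ker s := hδ ▸ LinearMap.mem_range_self δ z
      exact this
    rw [LinearMap.mem_ker]
    simp [ht', LinearMap.prod_apply, h1, h2, Prod.ext_iff]
  obtain ⟨σ, hσ⟩ := factor_surj s t' hs ht'ker
  set σE : Ω →ₗ[R] ((R × R) ⧸ W) := (LinearMap.fst R _ _).comp σ with hσE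
  have hpEσE : ∀ ω, pE (σE ω) = e ω := by
    have : ∀ y, pE (σE (s y)) = e (s y) := by
      intro y
      have h1 : σE (s y) = tE y := by rw [hσE]; simp [hσ y, ht']
      rw [h1]
      simp only [htE, LinearMap.sub_apply, LinearMap.comp_apply, LinearMap.inl_apply, map_sub]
      rw [hpEιE]
      have : pE (q (u y, 0)) = π (u y) := by simp [hpE, hq]; rfl
      rw [this]
      have := LinearMap.congr_fun hu y
      simpa using this
    intro ω
    obtain ⟨y, rfl⟩ := hs ω
    exact this y
  set ρ : R →ₗ[R] ((R × R) ⧸ W) :=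
    (q.comp (LinearMap.inl R R R)) - σE.comp (jm.comp π) with hρ
  have hρker : ∀ r, pE (ρ r) = 0 := by
    intro r
    simp only [hρ, LinearMap.sub_apply, LinearMap.comp_apply, LinearMap.inl_apply, map_sub]
    rw [hpEσE, hej]
    have : pE (q (r, 0)) = π r := by simp [hpE, hq]; rfl
    rw [this, sub_self]
  set K := LinearMap.ker pE with hK
  set ι' : R →ₗ[R] K := ιE.codRestrict K hpEιE with hι'
  have hι'bij : Function.Bijective ι' := by
    constructor
    · intro x y hxy
      exact hιEinj (congrArg Subtype.val hxy)
    · rintro ⟨z, hz⟩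
      obtain ⟨x, hx⟩ := hpEker z hz
      exact ⟨x, Subtype.ext hx⟩
  set eqv2 := LinearEquiv.ofBijective ι' hι'bij with heqv2
  refine ⟨eqv2.symm.toLinearMap.comp (ρ.codRestrict K hρker), fun x => ?_⟩
  have hρx : ρ (x : R) = ιE (f x) := by
    simp only [hρ, LinearMap.sub_apply, LinearMap.comp_apply, LinearMap.inl_apply]
    rw [hπ0 _ x.2, map_zero, map_zero, sub_zero]
    exact hkey _ x.2
  have hcod : (ρ.codRestrict K hρker) (x : R) = ι' (f x) := Subtype.ext (by
    exact hρx)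
  simp only [LinearMap.comp_apply, hcod]
  have h5 : eqv2 (f x) = ι' (f x) := rfl
  show eqv2.symm (ι' (f x)) = f x
  rw [← h5, LinearEquiv.symm_apply_apply]

end Part2

lemma baer_of_extend (R : Type) [CommRing R] [IsNoetherianRing R] [IsLocalRing R]
    (h3 : (maximalIdeal R) ^ 3 = ⊥)
    (hmax : ∀ f : (maximalIdeal R) →ₗ[R] R, ∃ g : R →ₗ[R] R, ∀ x : maximalIdeal R, g x = f x) :
    Module.Baer R R := by
  intro I₀ g₀
  induction I₀ using IsNoetherian.induction with
  | hgt I IH => ?_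
  revert g₀; intro g
  by_cases hI : I = ⊤
  · subst hI
    exact ⟨g.comp (LinearMap.id.codRestrict ⊤ fun x => trivial), fun x mem => rfl⟩
  have hIm : I ≤ maximalIdeal R := le_maximalIdeal hI
  by_cases hm : maximalIdeal R ≤ I
  · have hIeq : I = maximalIdeal R := le_antisymm hIm hm
    subst hIeq
    obtain ⟨G, hG⟩ := hmax g
    exact ⟨G, fun x mem => hG ⟨x, mem⟩⟩
  · -- find x ∉ I with (maximalIdeal R) * x ⊆ I
    obtain ⟨x, hxI, hxm⟩ :
        ∃ x : R, x ∉ I ∧ ∀ c ∈ maximalIdeal R, c * x ∈ I := by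
      by_cases hm2 : (maximalIdeal R) ^ 2 ≤ I
      · obtain ⟨x, hx1, hx2⟩ := SetLike.not_le_iff_exists.1 hm
        refine ⟨x, hx2, fun c hc => hm2 ?_⟩
        rw [sq]
        exact Ideal.mul_mem_mul hc hx1
      · obtain ⟨x, hx1, hx2⟩ := SetLike.not_le_iff_exists.1 hm2
        refine ⟨x, hx2, fun c hc => ?_⟩
        have : c * x ∈ maximalIdeal R * (maximalIdeal R) ^ 2 := Ideal.mul_mem_mul hc hx1
        have h32 : maximalIdeal R * (maximalIdeal R) ^ 2 = (maximalIdeal R) ^ 3 := by ring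
        rw [h32, h3] at this
        simp only [Submodule.mem_bot] at this
        rw [this]
        exact I.zero_mem
    -- extend g by x
    have hmemI : ∀ c : maximalIdeal R, (c : R) • x ∈ I := fun c => by
      simpa [smul_eq_mul] using hxm c c.2
    set fm : (maximalIdeal R) →ₗ[R] R :=
      g.comp (((LinearMap.toSpanSingleton R R x).comp
        (maximalIdeal R).subtype).codRestrict I hmemI) with hfm
    obtain ⟨G, hG⟩ := hmax fm
    set r : R := G 1 with hr
    have hkey : ∀ (c : R) (hc : c ∈ maximalIdeal R), g ⟨c * x, hxm c hc⟩ = c * r := by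
      intro c hc
      have h1 : G c = fm ⟨c, hc⟩ := hG ⟨c, hc⟩
      have h2 : G c = c * r := by
        have he : G c = G (c • (1 : R)) := by norm_num
        rw [he, map_smul, smul_eq_mul, hr]
      have h3 : fm ⟨c, hc⟩ = g ⟨c * x, hxm c hc⟩ := by
        apply congrArg g
        apply Subtype.ext
        simp [hfm, smul_eq_mul]
        rfl
      rw [← h3, ← h1, h2]
    set J : Ideal R := I ⊔ Submodule.span R {x} with hJ
    have hxJ : x ∈ J := Submodule.mem_sup_right (Submodule.mem_span_singleton_self x)
    have hIJ : I < J := lt_of_le_of_ne le_sup_left (fun h => hxI (h ▸ hxJ))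
    set Φ : (I × R) →ₗ[R] R :=
      (g.comp (LinearMap.fst R I R)) +
        (LinearMap.toSpanSingleton R R r).comp (LinearMap.snd R I R) with hΦ
    have hΨmem : ∀ p : I × R, (p.1 : R) + p.2 • x ∈ J := fun p =>
      J.add_mem (Submodule.mem_sup_left p.1.2)
        (Submodule.mem_sup_right (Submodule.smul_mem _ _ (Submodule.mem_span_singleton_self x)))
    set Ψ : (I × R) →ₗ[R] J :=
      (((I.subtype).comp (LinearMap.fst R I R)) +
        (LinearMap.toSpanSingleton R R x).comp (LinearMap.snd R I R)).codRestrict J hΨmem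
      with hΨ
    have hΨapp : ∀ p : I × R, (Ψ p : R) = (p.1 : R) + p.2 * x := by
      intro p
      simp [hΨ, smul_eq_mul]
      rfl
    have hΨsurj : Function.Surjective Ψ := by
      rintro ⟨z, hz⟩
      rw [hJ] at hz
      obtain ⟨i, hi, y, hy, rfl⟩ := Submodule.mem_sup.1 hz
      obtain ⟨c, rfl⟩ := Submodule.mem_span_singleton.1 hy
      exact ⟨(⟨i, hi⟩, c), Subtype.ext (by rw [hΨapp]; simp [smul_eq_mul])⟩
    have hker : LinearMap.ker Ψ ≤ LinearMap.ker Φ := by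
      rintro ⟨i, c⟩ hp
      have hp0 : (i : R) + c * x = 0 := by
        have : (Ψ (i, c) : R) = 0 := by
          rw [LinearMap.mem_ker.1 hp]
          rfl
        rw [hΨapp] at this
        exact this
      have hcx : c * x = -(i : R) := by linear_combination hp0
      have hcxI : c * x ∈ I := hcx ▸ I.neg_mem i.2
      have hcm : c ∈ maximalIdeal R := by
        by_contra hcu
        have hu : IsUnit c := by
          by_contra h
          exact hcu ((IsLocalRing.mem_maximalIdeal c).2 (mem_nonunits_iff.2 h))
        obtain ⟨v, hv⟩ := hu
        apply hxI
        have : x = (↑v⁻¹ : R) * (c * x) := by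
          rw [← hv, Units.inv_mul_cancel_left]
        rw [this]
        exact Ideal.mul_mem_left I _ hcxI
      have : Φ (i, c) = g i + c * r := by
        simp [hΦ, smul_eq_mul]
      rw [LinearMap.mem_ker, this]
      have h4 : g ⟨c * x, hcxI⟩ = c * r := by
        have := hkey c hcm
        rwa [(by rfl : g ⟨c * x, hxm c hcm⟩ = g ⟨c * x, hcxI⟩)] at this
      have h5 : i + (⟨c * x, hcxI⟩ : I) = 0 := Subtype.ext (by simpa using hp0)
      rw [← h4, ← map_add, h5, map_zero]
    obtain ⟨gJ, hgJ⟩ := factor_surj Ψ Φ hΨsurj hker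
    obtain ⟨G', hG'⟩ := IH J hIJ gJ
    refine ⟨G', fun z mem => ?_⟩
    have hzJ : z ∈ J := Submodule.mem_sup_left mem
    have h7 : Ψ (⟨z, mem⟩, 0) = ⟨z, hzJ⟩ := Subtype.ext (by rw [hΨapp]; simp)
    have h8 : gJ ⟨z, hzJ⟩ = Φ (⟨z, mem⟩, 0) := by rw [← h7, hgJ]
    rw [hG' z hzJ, h8]
    simp [hΦ]


/-- Over a commutative Noetherian local non-Gorenstein ring `(R, 𝔪, k)` with `𝔪³ = 0 ≠ 𝔪²`,
if in some minimal free resolution `⋯ → R^{rk 1} —d 0→ R^{rk 0} —ε→ M → 0` of a finitely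
generated module `M` the `n`-th syzygy `Ω^n_R(M)` (which is `M` itself for `n = 0` and the image
of the differential `d m` for `n = m + 1`) contains a copy of the residue field `k` as a direct
summand, then `M` is not totally reflexive. -/
theorem statement1
    (R : Type) [CommRing R] [IsNoetherianRing R] [IsLocalRing R]
    (hGor : ¬ Module.Injective R R)
    (h3 : (maximalIdeal R) ^ 3 = ⊥) (h2 : (maximalIdeal R) ^ 2 ≠ ⊥)
    (M : Type) [AddCommGroup M] [Module R M] [Module.Finite R M]
    (rk : ℕ → ℕ)
    (d : (i : ℕ) → ((Fin (rk (i + 1)) → R) →ₗ[R] (Fin (rk i) → R)))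
    (ε : (Fin (rk 0) → R) →ₗ[R] M)
    (hε : Function.Surjective ε)
    (hexact0 : LinearMap.range (d 0) = LinearMap.ker ε)
    (hexact : ∀ i : ℕ, LinearMap.range (d (i + 1)) = LinearMap.ker (d i))
    (hminε : LinearMap.ker ε ≤ (maximalIdeal R) • (⊤ : Submodule R (Fin (rk 0) → R)))
    (hmin : ∀ i : ℕ,
      LinearMap.range (d i) ≤ (maximalIdeal R) • (⊤ : Submodule R (Fin (rk i) → R)))
    (n : ℕ) (X : Type) [AddCommGroup X] [Module R X]
    (hsyz : (n = 0 ∧ Nonempty (M ≃ₗ[R] (ResidueField R × X))) ∨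
      (∃ m : ℕ, n = m + 1 ∧
        Nonempty ((LinearMap.range (d m)) ≃ₗ[R] (ResidueField R × X)))) :
    ¬ IsTotallyReflexive R M := by
  rintro ⟨hfin, hbij, hext, hextdual⟩
  have hereext : ∀ f : (maximalIdeal R) →ₗ[R] R,
      ∃ g : R →ₗ[R] R, ∀ x : maximalIdeal R, g x = f x := by
    rcases hsyz with ⟨hn0, ⟨eqv⟩⟩ | ⟨m, hnm, ⟨eqv⟩⟩
    · intro f
      refine extend_from_max R M X eqv (rk 0) ε hε (d 0) hexact0 (d 1) ?_ ?_ f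
      · apply LinearMap.ext; intro x
        have : (d 1) x ∈ LinearMap.ker (d 0) := by rw [← hexact 0]; exact ⟨x, rfl⟩
        exact this
      · exact fun φ hφ => dual_exact R M rk d ε hε hexact0 hexact 0
          (hext 1 (by norm_num)) φ hφ
    · intro f
      refine extend_from_max R (LinearMap.range (d m)) X eqv (rk (m+1))
        ((d m).rangeRestrict) (LinearMap.surjective_rangeRestrict (d m))
        (d (m+1)) ?_ (d (m+2)) ?_ ?_ f
      · rw [LinearMap.ker_rangeRestrict]
        exact hexact m
      · apply LinearMap.ext; intro x
        have : (d (m+2)) x ∈ LinearMap.ker (d (m+1)) := by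
          rw [← hexact (m+1)]; exact ⟨x, rfl⟩
        exact this
      · exact fun φ hφ => dual_exact R M rk d ε hε hexact0 hexact (m+1)
          (hext (m+2) (by norm_num)) φ hφ
  exact hGor (Module.Baer.injective (baer_of_extend R h3 hereext))
end Resolution
end

section
/- Let k be a field and S = k[X,Y,Z]/(X^2, Y^2, Z^2, YZ) with x, y, z the images of X, Y, Z. For every α, β ∈ k, the pair (x + α y + β z, x − α y − β z) is an exact pair of zero divisors in S, i.e., (0 :_S (x + α y + β z)) = (x − α y − β z) and (0 :_S (x − α y − β z)) = (x + α y + β z). -/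
set_option synthInstance.maxHeartbeats 1000000
set_option maxHeartbeats 1000000



/-- The defining ideal `(X², Y², Z², YZ)` of the ring `S = k[X,Y,Z]/(X², Y², Z², YZ)`. -/
noncomputable def sRel (k : Type) [Field k] : Ideal (MvPolynomial (Fin 3) k) :=
  Ideal.span ({MvPolynomial.X 0 ^ 2, MvPolynomial.X 1 ^ 2, MvPolynomial.X 2 ^ 2,
    MvPolynomial.X 1 * MvPolynomial.X 2} : Set (MvPolynomial (Fin 3) k))

/-- The local `k`-algebra `S = k[X,Y,Z]/(X², Y², Z², YZ)`. -/
abbrev SRing (k : Type) [Field k] : Type := MvPolynomial (Fin 3) k ⧸ sRel k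

/-- `x`, the image of `X` in `S`. -/
noncomputable def sx (k : Type) [Field k] : SRing k := Ideal.Quotient.mk _ (MvPolynomial.X 0)

/-- `y`, the image of `Y` in `S`. -/
noncomputable def sy (k : Type) [Field k] : SRing k := Ideal.Quotient.mk _ (MvPolynomial.X 1)

/-- `z`, the image of `Z` in `S`. -/
noncomputable def sz (k : Type) [Field k] : SRing k := Ideal.Quotient.mk _ (MvPolynomial.X 2)

/-- `(a, b)` is an exact pair of zero divisors: `a`, `b` are non-units with
`(0 : a) = (b)` and `(0 : b) = (a)`. -/
def IsExactZeroDivisorPair (R : Type) [CommRing R] (a b : R) : Prop :=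
  ¬ IsUnit a ∧ ¬ IsUnit b ∧
  (∀ x : R, x * a = 0 ↔ x ∈ Ideal.span ({b} : Set R)) ∧
  (∀ x : R, x * b = 0 ↔ x ∈ Ideal.span ({a} : Set R))


section Aux

variable (k : Type) [Field k]

abbrev MA := TrivSqZeroExt (DualNumber k) (DualNumber k × DualNumber k)

noncomputable def mgen : Fin 3 → MA k :=
  ![TrivSqZeroExt.inl DualNumber.eps, TrivSqZeroExt.inr (1, 0), TrivSqZeroExt.inr (0, 1)]

lemma hx2p : sx k * sx k = 0 := by
  rw [sx, ← map_mul, Ideal.Quotient.eq_zero_iff_mem, ← sq]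
  exact Ideal.subset_span (by simp)

lemma hy2p : sy k * sy k = 0 := by
  rw [sy, ← map_mul, Ideal.Quotient.eq_zero_iff_mem, ← sq]
  exact Ideal.subset_span (by simp)

lemma hz2p : sz k * sz k = 0 := by
  rw [sz, ← map_mul, Ideal.Quotient.eq_zero_iff_mem, ← sq]
  exact Ideal.subset_span (by simp)

lemma hyzp : sy k * sz k = 0 := by
  rw [sy, sz, ← map_mul, Ideal.Quotient.eq_zero_iff_mem]
  exact Ideal.subset_span (by simp)

lemma rel_ker : sRel k ≤
    RingHom.ker (MvPolynomial.aeval (mgen k) : MvPolynomial (Fin 3) k →ₐ[k] MA k).toRingHom := by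
  rw [sRel, Ideal.span_le]
  rintro p hp
  simp only [Set.mem_insert_iff, Set.mem_singleton_iff] at hp
  rcases hp with rfl | rfl | rfl | rfl <;>
    simp [mgen, TrivSqZeroExt.inl_mul_inl, TrivSqZeroExt.inr_mul_inr, sq, RingHom.mem_ker]

noncomputable def psiHom : SRing k →ₐ[k] MA k :=
  Ideal.Quotient.liftₐ (sRel k) (MvPolynomial.aeval (mgen k)) (fun a ha => rel_ker k ha)

lemma psi_x : psiHom k (sx k) = TrivSqZeroExt.inl DualNumber.eps := by
  simp [psiHom, sx, mgen]
  erw [Ideal.Quotient.lift_mk]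
  simp

lemma psi_y : psiHom k (sy k) = TrivSqZeroExt.inr (1, 0) := by
  simp [psiHom, sy, mgen]
  erw [Ideal.Quotient.lift_mk]
  simp

lemma psi_z : psiHom k (sz k) = TrivSqZeroExt.inr (0, 1) := by
  simp [psiHom, sz, mgen]
  erw [Ideal.Quotient.lift_mk]
  simp

lemma ssmul (c : k) (u : SRing k) : c • u = algebraMap k (SRing k) c * u := by
  obtain ⟨p, rfl⟩ := Ideal.Quotient.mk_surjective u
  have h1 : c • (Ideal.Quotient.mk (sRel k) p) = Ideal.Quotient.mk (sRel k) (c • p) := rfl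
  rw [h1, MvPolynomial.smul_eq_C_mul, map_mul]
  congr 1

noncomputable def cmb (c0 c1 c2 c3 c4 c5 : k) : SRing k :=
  c0 • 1 + c1 • sx k + c2 • sy k + c3 • sz k + c4 • (sx k * sy k) + c5 • (sx k * sz k)

lemma span6 (u : SRing k) :
    ∃ c0 c1 c2 c3 c4 c5 : k, u = cmb k c0 c1 c2 c3 c4 c5 := by
  obtain ⟨p, rfl⟩ := Ideal.Quotient.mk_surjective u
  induction p using MvPolynomial.induction_on with
  | C a =>
      refine ⟨a, 0, 0, 0, 0, 0, ?_⟩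
      simp only [cmb, ssmul, map_zero, zero_mul, add_zero, mul_one]
      rfl
  | add p q hp hq =>
      obtain ⟨c0, c1, c2, c3, c4, c5, hc⟩ := hp
      obtain ⟨d0, d1, d2, d3, d4, d5, hd⟩ := hq
      refine ⟨c0 + d0, c1 + d1, c2 + d2, c3 + d3, c4 + d4, c5 + d5, ?_⟩
      rw [map_add, hc, hd]
      simp only [cmb, add_smul]
      module
  | mul_X p i hp =>
      obtain ⟨c0, c1, c2, c3, c4, c5, hc⟩ := hp
      have hmul : (Ideal.Quotient.mk (sRel k)) (p * MvPolynomial.X i)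
          = cmb k c0 c1 c2 c3 c4 c5 * Ideal.Quotient.mk (sRel k) (MvPolynomial.X i) := by
        rw [map_mul, hc]
      fin_cases i
      · refine ⟨0, c0, 0, 0, c2, c3, ?_⟩
        rw [hmul]
        show cmb k c0 c1 c2 c3 c4 c5 * sx k = _
        simp only [cmb, ssmul, map_zero, zero_mul, add_zero, zero_add]
        linear_combination (algebraMap k (SRing k) c1 + algebraMap k (SRing k) c4 * sy k
          + algebraMap k (SRing k) c5 * sz k) * hx2p k
      · refine ⟨0, 0, c0, 0, c1, 0, ?_⟩
        rw [hmul]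
        show cmb k c0 c1 c2 c3 c4 c5 * sy k = _
        simp only [cmb, ssmul, map_zero, zero_mul, add_zero, zero_add]
        linear_combination (algebraMap k (SRing k) c2 + algebraMap k (SRing k) c4 * sx k) * hy2p k
          + (algebraMap k (SRing k) c3 + algebraMap k (SRing k) c5 * sx k) * hyzp k
      · refine ⟨0, 0, 0, c0, 0, c1, ?_⟩
        rw [hmul]
        show cmb k c0 c1 c2 c3 c4 c5 * sz k = _
        simp only [cmb, ssmul, map_zero, zero_mul, add_zero, zero_add]
        linear_combination (algebraMap k (SRing k) c3 + algebraMap k (SRing k) c5 * sx k) * hz2p k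
          + (algebraMap k (SRing k) c2 + algebraMap k (SRing k) c4 * sx k) * hyzp k

lemma psi_alg (c : k) : psiHom k (algebraMap k (SRing k) c) = algebraMap k (MA k) c :=
  (psiHom k).commutes c

lemma indep (c0 c1 c2 c3 c4 c5 : k) (h : cmb k c0 c1 c2 c3 c4 c5 = 0) :
    c0 = 0 ∧ c1 = 0 ∧ c2 = 0 ∧ c3 = 0 ∧ c4 = 0 ∧ c5 = 0 := by
  have h2 : psiHom k (cmb k c0 c1 c2 c3 c4 c5) = 0 := by rw [h, map_zero]
  simp only [cmb, ssmul, map_add, map_mul, map_one, psi_x, psi_y, psi_z, psi_alg,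
    TrivSqZeroExt.algebraMap_eq_inl'] at h2
  rw [TrivSqZeroExt.ext_iff] at h2
  obtain ⟨ha, hb⟩ := h2
  simp only [TrivSqZeroExt.inl_mul_inl, TrivSqZeroExt.inl_mul_inr, TrivSqZeroExt.inr_mul_inr,
    TrivSqZeroExt.fst_add, TrivSqZeroExt.snd_add, TrivSqZeroExt.fst_inl, TrivSqZeroExt.snd_inl,
    TrivSqZeroExt.fst_inr, TrivSqZeroExt.snd_inr, TrivSqZeroExt.fst_one, TrivSqZeroExt.snd_one,
    TrivSqZeroExt.fst_zero, TrivSqZeroExt.snd_zero, mul_one, add_zero, zero_add] at ha hb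
  simp only [DualNumber.eps, Prod.smul_mk, Prod.mk_add_mk, Prod.ext_iff, smul_eq_mul,
    TrivSqZeroExt.inl_mul_inl, TrivSqZeroExt.inl_mul_inr, TrivSqZeroExt.inr_mul_inr,
    TrivSqZeroExt.ext_iff, TrivSqZeroExt.fst_add, TrivSqZeroExt.snd_add,
    TrivSqZeroExt.fst_inl, TrivSqZeroExt.snd_inl, TrivSqZeroExt.fst_inr, TrivSqZeroExt.snd_inr,
    TrivSqZeroExt.fst_zero, TrivSqZeroExt.snd_zero, Prod.fst_zero, Prod.snd_zero,
    smul_zero, mul_zero, zero_mul, mul_one, one_mul, add_zero, zero_add, smul_eq_mul,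
    Algebra.algebraMap_self, RingHom.id_apply] at ha hb
  tauto

-- ring hom to k for nonunit detection
noncomputable def chiHom : SRing k →ₐ[k] k :=
  ((TrivSqZeroExt.fstHom k k k).comp (TrivSqZeroExt.fstHom k (DualNumber k) (DualNumber k × DualNumber k))).comp (psiHom k)

lemma chi_x : chiHom k (sx k) = 0 := by
  rw [chiHom, AlgHom.comp_apply, AlgHom.comp_apply, psi_x]
  simp only [TrivSqZeroExt.fstHom_apply, TrivSqZeroExt.fst_inl, DualNumber.eps,
    TrivSqZeroExt.fst_inr]

lemma chi_y : chiHom k (sy k) = 0 := by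
  rw [chiHom, AlgHom.comp_apply, AlgHom.comp_apply, psi_y]
  simp only [TrivSqZeroExt.fstHom_apply, TrivSqZeroExt.fst_inr, TrivSqZeroExt.fst_zero]

lemma chi_z : chiHom k (sz k) = 0 := by
  rw [chiHom, AlgHom.comp_apply, AlgHom.comp_apply, psi_z]
  simp only [TrivSqZeroExt.fstHom_apply, TrivSqZeroExt.fst_inr, TrivSqZeroExt.fst_zero]

lemma nonunit_lin (α β : k) : ¬ IsUnit (sx k + α • sy k + β • sz k) := by
  intro h
  have h2 := h.map (chiHom k)
  rw [map_add, map_add, ssmul, ssmul, map_mul, map_mul, chi_x, chi_y, chi_z] at h2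
  simp at h2

local notation "AM" => algebraMap k (SRing k)

lemma hba (α β : k) : (sx k - α • sy k - β • sz k) * (sx k + α • sy k + β • sz k) = 0 := by
  simp only [ssmul]
  linear_combination hx2p k - (AM α)^2 * hy2p k - (AM β)^2 * hz2p k
    - 2 * (AM α) * (AM β) * hyzp k


end Aux

/-- In `S = k[X,Y,Z]/(X²,Y²,Z²,YZ)`, for every `α, β ∈ k` the pair
`(x + αy + βz, x − αy − βz)` is an exact pair of zero divisors. -/
theorem statement10 (k : Type) [Field k] (α β : k) :
    IsExactZeroDivisorPair (SRing k)
      (sx k + α • sy k + β • sz k) (sx k - α • sy k - β • sz k) := by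
  refine ⟨nonunit_lin k α β, ?_, ?_, ?_⟩
  · have : sx k - α • sy k - β • sz k = sx k + (-α) • sy k + (-β) • sz k := by
      simp only [neg_smul]; ring
    rw [this]
    exact nonunit_lin k (-α) (-β)
  · intro u
    constructor
    · intro hu
      obtain ⟨c0, c1, c2, c3, c4, c5, hc⟩ := span6 k u
      have key : u * (sx k + α • sy k + β • sz k)
          = cmb k 0 c0 (c0*α) (c0*β) (c1*α+c2) (c1*β+c3) := by
        rw [hc]
        simp only [cmb, ssmul, map_add, map_mul, map_zero, zero_mul, zero_add, mul_one]
        linear_combination (algebraMap k (SRing k) c1 + algebraMap k (SRing k) c4 * sy k + algebraMap k (SRing k) c5 * sz k) * hx2p k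
          + (algebraMap k (SRing k) c2 * algebraMap k (SRing k) α + algebraMap k (SRing k) c4 * algebraMap k (SRing k) α * sx k) * hy2p k
          + (algebraMap k (SRing k) c3 * algebraMap k (SRing k) β + algebraMap k (SRing k) c5 * algebraMap k (SRing k) β * sx k) * hz2p k
          + (algebraMap k (SRing k) c2 * algebraMap k (SRing k) β + algebraMap k (SRing k) c3 * algebraMap k (SRing k) α + (algebraMap k (SRing k) c4 * algebraMap k (SRing k) β + algebraMap k (SRing k) c5 * algebraMap k (SRing k) α) * sx k) * hyzp k
      rw [hu] at key
      obtain ⟨-, hc0, -, -, h4, h5⟩ := indep k _ _ _ _ _ _ key.symm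
      rw [Ideal.mem_span_singleton']
      refine ⟨c1 • 1 + c4 • sy k + c5 • sz k, ?_⟩
      have e0 : algebraMap k (SRing k) c0 = 0 := by rw [hc0, map_zero]
      have e4 : algebraMap k (SRing k) c1 * algebraMap k (SRing k) α + algebraMap k (SRing k) c2 = 0 := by
        rw [← map_mul, ← map_add, h4, map_zero]
      have e5 : algebraMap k (SRing k) c1 * algebraMap k (SRing k) β + algebraMap k (SRing k) c3 = 0 := by
        rw [← map_mul, ← map_add, h5, map_zero]
      rw [hc]
      simp only [cmb, ssmul, map_add, map_mul, mul_one]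
      linear_combination (-1 : SRing k) * e0 - sy k * e4 - sz k * e5
        - (algebraMap k (SRing k) c4 * algebraMap k (SRing k) α) * hy2p k - (algebraMap k (SRing k) c5 * algebraMap k (SRing k) β) * hz2p k
        - (algebraMap k (SRing k) c4 * algebraMap k (SRing k) β + algebraMap k (SRing k) c5 * algebraMap k (SRing k) α) * hyzp k
    · intro hu
      rw [Ideal.mem_span_singleton'] at hu
      obtain ⟨v, hv⟩ := hu
      rw [← hv, mul_assoc, hba k α β, mul_zero]
  · intro u
    constructor
    · intro hu
      obtain ⟨c0, c1, c2, c3, c4, c5, hc⟩ := span6 k u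
      have key : u * (sx k - α • sy k - β • sz k)
          = cmb k 0 c0 (-(c0*α)) (-(c0*β)) (c2-c1*α) (c3-c1*β) := by
        rw [hc]
        simp only [cmb, ssmul, map_add, map_mul, map_zero, map_neg, map_sub, zero_mul, zero_add,
          mul_one]
        linear_combination (algebraMap k (SRing k) c1 + algebraMap k (SRing k) c4 * sy k + algebraMap k (SRing k) c5 * sz k) * hx2p k
          + (-(algebraMap k (SRing k) c2 * algebraMap k (SRing k) α) - algebraMap k (SRing k) c4 * algebraMap k (SRing k) α * sx k) * hy2p k
          + (-(algebraMap k (SRing k) c3 * algebraMap k (SRing k) β) - algebraMap k (SRing k) c5 * algebraMap k (SRing k) β * sx k) * hz2p k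
          + (-(algebraMap k (SRing k) c2 * algebraMap k (SRing k) β) - algebraMap k (SRing k) c3 * algebraMap k (SRing k) α - (algebraMap k (SRing k) c4 * algebraMap k (SRing k) β + algebraMap k (SRing k) c5 * algebraMap k (SRing k) α) * sx k) * hyzp k
      rw [hu] at key
      obtain ⟨-, hc0, -, -, h4, h5⟩ := indep k _ _ _ _ _ _ key.symm
      rw [Ideal.mem_span_singleton']
      refine ⟨c1 • 1 + c4 • sy k + c5 • sz k, ?_⟩
      have e0 : algebraMap k (SRing k) c0 = 0 := by rw [hc0, map_zero]
      have e4 : algebraMap k (SRing k) c2 - algebraMap k (SRing k) c1 * algebraMap k (SRing k) α = 0 := by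
        rw [← map_mul, ← map_sub, h4, map_zero]
      have e5 : algebraMap k (SRing k) c3 - algebraMap k (SRing k) c1 * algebraMap k (SRing k) β = 0 := by
        rw [← map_mul, ← map_sub, h5, map_zero]
      rw [hc]
      simp only [cmb, ssmul, map_add, map_mul, mul_one]
      linear_combination (-1 : SRing k) * e0 - sy k * e4 - sz k * e5
        + (algebraMap k (SRing k) c4 * algebraMap k (SRing k) α) * hy2p k + (algebraMap k (SRing k) c5 * algebraMap k (SRing k) β) * hz2p k
        + (algebraMap k (SRing k) c4 * algebraMap k (SRing k) β + algebraMap k (SRing k) c5 * algebraMap k (SRing k) α) * hyzp k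
    · intro hu
      rw [Ideal.mem_span_singleton'] at hu
      obtain ⟨v, hv⟩ := hu
      have hab : (sx k + α • sy k + β • sz k) * (sx k - α • sy k - β • sz k) = 0 := by
        rw [mul_comm]; exact hba k α β
      rw [← hv, mul_assoc, hab, mul_zero]
end

section
/- Let k be a field of characteristic 0 and S = k[X,Y,Z]/(X^2, Y^2, Z^2, YZ) with x, y, z the images of X, Y, Z. The S-module T = coker [[x, z], [y, x]] is not isomorphic to the cokernel of any 2×2 upper triangular matrix with entries in the maximal ideal of S; equivalently, there do not exist invertible 2×2 matrices P, Q over S such that P · [[x, z], [y, x]] · Q is upper triangular. -/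
set_option synthInstance.maxHeartbeats 1000000
set_option maxHeartbeats 1000000

/-- The cokernel of a `2×2` matrix over `S`, acting on column vectors `S² → S²`. -/
abbrev coker2 (k : Type) [Field k] (A : Matrix (Fin 2) (Fin 2) (SRing k)) : Type :=
  (Fin 2 → SRing k) ⧸ LinearMap.range A.mulVecLin

namespace Aux13
open MvPolynomial DualNumber

variable (k : Type) [Field k]

theorem rel_le {B : Type*} [CommRing B] [Algebra k B] (v : Fin 3 → B)
    (h0 : v 0 ^ 2 = 0) (h1 : v 1 ^ 2 = 0) (h2 : v 2 ^ 2 = 0) (h12 : v 1 * v 2 = 0) :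
    ∀ a ∈ sRel k, (aeval v) a = 0 := by
  intro a ha
  refine (Ideal.span_le.mpr ?_ :
    sRel k ≤ RingHom.ker (aeval v : MvPolynomial (Fin 3) k →ₐ[k] B).toRingHom) ha
  rintro p hp
  simp only [Set.mem_insert_iff, Set.mem_singleton_iff] at hp
  rcases hp with h|h|h|h <;> subst h <;>
    simp [RingHom.mem_ker, h0, h1, h2, h12]

/-- constant-term map -/
noncomputable def e0 : SRing k →ₐ[k] k :=
  Ideal.Quotient.liftₐ (sRel k) (aeval 0) (rel_le k 0 (by simp) (by simp) (by simp) (by simp))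

/-- coefficient-extraction maps into dual numbers -/
noncomputable def dl (i : Fin 3) : SRing k →ₐ[k] DualNumber k :=
  Ideal.Quotient.liftₐ (sRel k) (aeval (fun j => if j = i then ε else 0))
    (rel_le k _ (by split_ifs <;> simp [sq, eps_mul_eps])
      (by split_ifs <;> simp [sq, eps_mul_eps])
      (by split_ifs <;> simp [sq, eps_mul_eps])
      (by split_ifs with h1 h2 <;> simp))

@[simp] theorem e0_mk (p : MvPolynomial (Fin 3) k) :
    e0 k (Ideal.Quotient.mk _ p) = aeval 0 p := rfl

@[simp] theorem dl_mk (i : Fin 3) (p : MvPolynomial (Fin 3) k) :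
    dl k i (Ideal.Quotient.mk _ p) = aeval (fun j => if j = i then ε else 0) p := rfl

@[simp] theorem e0_sx : e0 k (sx k) = 0 := by simp [sx]
@[simp] theorem e0_sy : e0 k (sy k) = 0 := by simp [sy]
@[simp] theorem e0_sz : e0 k (sz k) = 0 := by simp [sz]

@[simp] theorem dl_sx0 : dl k 0 (sx k) = ε := by simp [sx]
@[simp] theorem dl_sy0 : dl k 0 (sy k) = 0 := by simp [sy]
@[simp] theorem dl_sz0 : dl k 0 (sz k) = 0 := by simp [sz]
@[simp] theorem dl_sy1 : dl k 1 (sy k) = ε := by simp [sy]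
@[simp] theorem dl_sx1 : dl k 1 (sx k) = 0 := by simp [sx]
@[simp] theorem dl_sz1 : dl k 1 (sz k) = 0 := by simp [sz]
@[simp] theorem dl_sz2 : dl k 2 (sz k) = ε := by simp [sz]
@[simp] theorem dl_sx2 : dl k 2 (sx k) = 0 := by simp [sx]
@[simp] theorem dl_sy2 : dl k 2 (sy k) = 0 := by simp [sy]

theorem fst_dl (i : Fin 3) (f : SRing k) : (dl k i f).fst = e0 k f := by
  obtain ⟨p, rfl⟩ := Ideal.Quotient.mk_surjective f
  rw [dl_mk, e0_mk]
  rw [show TrivSqZeroExt.fst ((aeval fun j => if j = i then (ε : DualNumber k) else 0) p)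
      = TrivSqZeroExt.fstHom k k k ((aeval fun j => if j = i then (ε : DualNumber k) else 0) p)
      from rfl,
    MvPolynomial.comp_aeval_apply]
  have hv : (fun j => (TrivSqZeroExt.fstHom k k k) (if j = i then (ε : DualNumber k) else 0))
      = (0 : Fin 3 → k) := by
    funext j; split_ifs <;> simp
  rw [hv]

theorem snd_mul_eps_mul (a b : DualNumber k) : (a * ε * b).snd = a.fst * b.fst := by
  simp [DualNumber.snd_mul, TrivSqZeroExt.fst_mul]

theorem gen_zero (p : MvPolynomial (Fin 3) k)
    (hp : p ∈ ({X 0 ^ 2, X 1 ^ 2, X 2 ^ 2, X 1 * X 2} : Set (MvPolynomial (Fin 3) k))) :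
    Ideal.Quotient.mk (sRel k) p = 0 :=
  Ideal.Quotient.eq_zero_iff_mem.mpr (Ideal.subset_span hp)

theorem sx_sq : sx k * sx k = 0 := by
  rw [sx, ← map_mul, ← sq]; exact gen_zero k _ (by simp)
theorem sy_sq : sy k * sy k = 0 := by
  rw [sy, ← map_mul, ← sq]; exact gen_zero k _ (by simp)
theorem sz_sq : sz k * sz k = 0 := by
  rw [sz, ← map_mul, ← sq]; exact gen_zero k _ (by simp)
theorem syz : sy k * sz k = 0 := by
  rw [sy, sz, ← map_mul]; exact gen_zero k _ (by simp)

theorem cube_zero (g : SRing k) (hg : g ∈ Ideal.span ({sx k, sy k, sz k} : Set (SRing k))) :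
    g * g * g = 0 := by
  rw [Ideal.span_insert, Ideal.span_insert, Submodule.mem_sup] at hg
  obtain ⟨u, hu, w, hw, rfl⟩ := hg
  rw [Submodule.mem_sup] at hw
  obtain ⟨v, hv, w, hw, rfl⟩ := hw
  rw [Ideal.mem_span_singleton'] at hu hv hw
  obtain ⟨a, rfl⟩ := hu; obtain ⟨b, rfl⟩ := hv; obtain ⟨c, rfl⟩ := hw
  have hx := sx_sq k; have hy := sy_sq k; have hz := sz_sq k; have hyz := syz k
  linear_combination (a^3*sx k + 3*a^2*b*sy k + 3*a^2*c*sz k) * hx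
    + (3*a*b^2*sx k + b^3*sy k) * hy + (3*a*c^2*sx k + c^3*sz k) * hz
    + (6*a*b*c*sx k + 3*b^2*c*sy k + 3*b*c^2*sz k) * hyz

theorem mk_mem_m (q : MvPolynomial (Fin 3) k) (hq : constantCoeff q = 0) :
    Ideal.Quotient.mk (sRel k) q ∈ Ideal.span ({sx k, sy k, sz k} : Set (SRing k)) := by
  have himg : (X '' (Set.univ : Set (Fin 3)) : Set (MvPolynomial (Fin 3) k))
      = {X 0, X 1, X 2} := by
    ext r
    constructor
    · rintro ⟨i, -, rfl⟩; fin_cases i <;> simp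
    · rintro (rfl | rfl | rfl)
      exacts [⟨0, trivial, rfl⟩, ⟨1, trivial, rfl⟩, ⟨2, trivial, rfl⟩]
  have hq' : q ∈ Ideal.span ({X 0, X 1, X 2} : Set (MvPolynomial (Fin 3) k)) := by
    rw [← himg, mem_ideal_span_X_image]
    intro m hm
    have hm0 : m ≠ 0 := by
      rintro rfl
      exact (MvPolynomial.mem_support_iff.mp hm) hq
    obtain ⟨i, hi⟩ := Finsupp.ne_iff.mp hm0
    exact ⟨i, trivial, hi⟩
  have := Ideal.mem_map_of_mem (Ideal.Quotient.mk (sRel k)) hq'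
  rwa [Ideal.map_span, Set.image_insert_eq, Set.image_insert_eq, Set.image_singleton] at this

theorem algebraMap_eq_mk_C (c : k) :
    algebraMap k (SRing k) c = Ideal.Quotient.mk (sRel k) (C c) := rfl

theorem sub_e0_mem (p : MvPolynomial (Fin 3) k) :
    Ideal.Quotient.mk (sRel k) p - algebraMap k (SRing k) (aeval (0 : Fin 3 → k) p)
      ∈ Ideal.span ({sx k, sy k, sz k} : Set (SRing k)) := by
  rw [algebraMap_eq_mk_C, ← map_sub]
  apply mk_mem_m
  simp [aeval_zero']

theorem isUnit_of_e0_ne (f : SRing k) (h : e0 k f ≠ 0) : IsUnit f := by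
  obtain ⟨p, rfl⟩ := Ideal.Quotient.mk_surjective f
  have hc : (aeval (0 : Fin 3 → k)) p ≠ 0 := by simpa using h
  have hmem := sub_e0_mem k p
  have hnil : IsNilpotent (Ideal.Quotient.mk (sRel k) p
      - algebraMap k (SRing k) (aeval (0 : Fin 3 → k) p)) :=
    ⟨3, by rw [pow_succ, pow_two]; exact cube_zero k _ hmem⟩
  have hu : IsUnit (algebraMap k (SRing k) ((aeval (0 : Fin 3 → k)) p)) :=
    (isUnit_iff_ne_zero.mpr hc).map (algebraMap k (SRing k))
  have := hnil.isUnit_add_right_of_commute hu (Commute.all _ _)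
  rwa [sub_add_cancel] at this


theorem mA_zero (i j : Fin 2) : e0 k (!![sx k, sz k; sy k, sx k] i j) = 0 := by
  fin_cases i <;> fin_cases j <;> simp

theorem core (P Q : Matrix (Fin 2) (Fin 2) (SRing k)) (hP : IsUnit P) (hQ : IsUnit Q)
    (h : (P * !![sx k, sz k; sy k, sx k] * Q) 1 0 = 0) : False := by
  have heq : (P 1 0 * sx k + P 1 1 * sy k) * Q 0 0
      + (P 1 0 * sz k + P 1 1 * sx k) * Q 1 0 = 0 := by
    rw [← h]
    have m00 : !![sx k, sz k; sy k, sx k] 0 0 = sx k := rfl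
    have m01 : !![sx k, sz k; sy k, sx k] 0 1 = sz k := rfl
    have m10 : !![sx k, sz k; sy k, sx k] 1 0 = sy k := rfl
    have m11 : !![sx k, sz k; sy k, sx k] 1 1 = sx k := rfl
    simp only [Matrix.mul_apply, Fin.sum_univ_two, m00, m01, m10, m11]
  have ex : e0 k (P 1 0) * e0 k (Q 0 0) + e0 k (P 1 1) * e0 k (Q 1 0) = 0 := by
    have t := congrArg (fun r => (dl k 0 r).snd) heq
    simp only [map_add, map_mul, dl_sx0, dl_sy0, dl_sz0, mul_zero, zero_mul, add_zero,
      zero_add, map_zero, TrivSqZeroExt.snd_add, snd_mul_eps_mul, fst_dl,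
      TrivSqZeroExt.snd_zero] at t
    exact t
  have ey : e0 k (P 1 1) * e0 k (Q 0 0) = 0 := by
    have t := congrArg (fun r => (dl k 1 r).snd) heq
    simp only [map_add, map_mul, dl_sx1, dl_sy1, dl_sz1, mul_zero, zero_mul, add_zero,
      zero_add, map_zero, TrivSqZeroExt.snd_add, snd_mul_eps_mul, fst_dl,
      TrivSqZeroExt.snd_zero] at t
    exact t
  have ez : e0 k (P 1 0) * e0 k (Q 1 0) = 0 := by
    have t := congrArg (fun r => (dl k 2 r).snd) heq
    simp only [map_add, map_mul, dl_sx2, dl_sy2, dl_sz2, mul_zero, zero_mul, add_zero,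
      zero_add, map_zero, TrivSqZeroExt.snd_add, snd_mul_eps_mul, fst_dl,
      TrivSqZeroExt.snd_zero] at t
    exact t
  have hdP : e0 k (P 0 0) * e0 k (P 1 1) - e0 k (P 0 1) * e0 k (P 1 0) ≠ 0 := by
    have h1 : IsUnit (e0 k P.det) := ((Matrix.isUnit_iff_isUnit_det P).mp hP).map (e0 k)
    rw [Matrix.det_fin_two] at h1
    simpa only [map_sub, map_mul] using isUnit_iff_ne_zero.mp h1
  have hdQ : e0 k (Q 0 0) * e0 k (Q 1 1) - e0 k (Q 0 1) * e0 k (Q 1 0) ≠ 0 := by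
    have h1 : IsUnit (e0 k Q.det) := ((Matrix.isUnit_iff_isUnit_det Q).mp hQ).map (e0 k)
    rw [Matrix.det_fin_two] at h1
    simpa only [map_sub, map_mul] using isUnit_iff_ne_zero.mp h1
  rcases eq_or_ne (e0 k (Q 0 0)) 0 with hq00 | hq00
  · have hq10 : e0 k (Q 1 0) ≠ 0 := by
      intro h10; apply hdQ; rw [hq00, h10]; ring
    have hp10 : e0 k (P 1 0) = 0 := by
      rcases mul_eq_zero.mp ez with h' | h'
      · exact h'
      · exact absurd h' hq10
    have hp11 : e0 k (P 1 1) = 0 := by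
      rw [hq00, mul_zero, zero_add] at ex
      · rcases mul_eq_zero.mp ex with h' | h'
        · exact h'
        · exact absurd h' hq10
    apply hdP; rw [hp10, hp11]; ring
  · have hp11 : e0 k (P 1 1) = 0 := by
      rcases mul_eq_zero.mp ey with h' | h'
      · exact h'
      · exact absurd h' hq00
    have hp10 : e0 k (P 1 0) = 0 := by
      rw [hp11, zero_mul, add_zero] at ex
      rcases mul_eq_zero.mp ex with h' | h'
      · exact h'
      · exact absurd h' hq00
    apply hdP; rw [hp10, hp11]; ring

theorem eps_range (M : Matrix (Fin 2) (Fin 2) (SRing k)) (hM : ∀ i j, e0 k (M i j) = 0)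
    (v : Fin 2 → SRing k) (hv : v ∈ LinearMap.range M.mulVecLin) (i : Fin 2) :
    e0 k (v i) = 0 := by
  obtain ⟨w, rfl⟩ := hv
  simp [Matrix.mulVecLin_apply, Matrix.mulVec, dotProduct, Fin.sum_univ_two,
    map_add, map_mul, hM]

theorem part1 (U : Matrix (Fin 2) (Fin 2) (SRing k))
    (hU : ∀ i j : Fin 2, U i j ∈ Ideal.span ({sx k, sy k, sz k} : Set (SRing k)))
    (hU10 : U 1 0 = 0)
    (e : (coker2 k !![sx k, sz k; sy k, sx k]) ≃ₗ[SRing k] coker2 k U) : False := by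
  set A : Matrix (Fin 2) (Fin 2) (SRing k) := !![sx k, sz k; sy k, sx k] with hA
  -- entries of U are killed by e0
  have hm_le : Ideal.span ({sx k, sy k, sz k} : Set (SRing k))
      ≤ RingHom.ker (e0 k).toRingHom := by
    rw [Ideal.span_le]
    rintro r (rfl | rfl | rfl) <;> simp [RingHom.mem_ker]
  have e0U : ∀ i j, e0 k (U i j) = 0 := fun i j => hm_le (hU i j)
  have e0A : ∀ i j, e0 k (A i j) = 0 := mA_zero k
  -- lift e and e.symm to matrices F and G
  choose F' hF' using fun j : Fin 2 =>
    Submodule.Quotient.mk_surjective (LinearMap.range (Matrix.mulVecLin U))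
      (e (Submodule.Quotient.mk (Pi.single j 1)))
  choose G' hG' using fun j : Fin 2 =>
    Submodule.Quotient.mk_surjective (LinearMap.range (Matrix.mulVecLin A))
      (e.symm (Submodule.Quotient.mk (Pi.single j 1)))
  set F : Matrix (Fin 2) (Fin 2) (SRing k) := Matrix.of fun i j => F' j i with hF
  set G : Matrix (Fin 2) (Fin 2) (SRing k) := Matrix.of fun i j => G' j i with hG
  have hFcol : ∀ j, F.mulVec (Pi.single j 1) = F' j := by
    intro j; rw [Matrix.mulVec_single_one]; rfl
  have hGcol : ∀ j, G.mulVec (Pi.single j 1) = G' j := by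
    intro j; rw [Matrix.mulVec_single_one]; rfl
  have hFkey' : ((LinearMap.range (Matrix.mulVecLin U)).mkQ.comp F.mulVecLin)
      = (e : coker2 k A →ₗ[SRing k] coker2 k U).comp
        (LinearMap.range (Matrix.mulVecLin A)).mkQ := by
    apply (Pi.basisFun (SRing k) (Fin 2)).ext
    intro j
    rw [Pi.basisFun_apply, LinearMap.comp_apply, LinearMap.comp_apply,
      Matrix.mulVecLin_apply, hFcol, Submodule.mkQ_apply, Submodule.mkQ_apply,
      hF' j, LinearEquiv.coe_coe]
  have hFkey : ∀ w : Fin 2 → SRing k,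
      (Submodule.Quotient.mk (F.mulVec w) : coker2 k U)
        = e (Submodule.Quotient.mk w) := by
    intro w
    have := LinearMap.congr_fun hFkey' w
    simpa only [LinearMap.comp_apply, Matrix.mulVecLin_apply, Submodule.mkQ_apply,
      LinearEquiv.coe_coe] using this
  have hGkey' : ((LinearMap.range (Matrix.mulVecLin A)).mkQ.comp G.mulVecLin)
      = (e.symm : coker2 k U →ₗ[SRing k] coker2 k A).comp
        (LinearMap.range (Matrix.mulVecLin U)).mkQ := by
    apply (Pi.basisFun (SRing k) (Fin 2)).ext
    intro j
    rw [Pi.basisFun_apply, LinearMap.comp_apply, LinearMap.comp_apply,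
      Matrix.mulVecLin_apply, hGcol, Submodule.mkQ_apply, Submodule.mkQ_apply,
      hG' j, LinearEquiv.coe_coe]
  have hGkey : ∀ w : Fin 2 → SRing k,
      (Submodule.Quotient.mk (G.mulVec w) : coker2 k A)
        = e.symm (Submodule.Quotient.mk w) := by
    intro w
    have := LinearMap.congr_fun hGkey' w
    simpa only [LinearMap.comp_apply, Matrix.mulVecLin_apply, Submodule.mkQ_apply,
      LinearEquiv.coe_coe] using this
  -- columns of F*A lie in the range of U
  have hCex : ∀ j : Fin 2, ∃ c : Fin 2 → SRing k,
      U.mulVec c = F.mulVec (A.mulVec (Pi.single j 1)) := by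
    intro j
    have hz : (Submodule.Quotient.mk (F.mulVec (A.mulVec (Pi.single j 1))) : coker2 k U)
        = 0 := by
      rw [hFkey]
      have : (Submodule.Quotient.mk (A.mulVec (Pi.single j 1)) : coker2 k A) = 0 :=
        (Submodule.Quotient.mk_eq_zero _).mpr ⟨Pi.single j 1, rfl⟩
      rw [this, map_zero]
    obtain ⟨c, hc⟩ := (Submodule.Quotient.mk_eq_zero _).mp hz
    exact ⟨c, hc⟩
  choose Cc hCc using hCex
  set Cm : Matrix (Fin 2) (Fin 2) (SRing k) := Matrix.of fun i j => Cc j i with hCm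
  have hCmcol : ∀ j, Cm.mulVec (Pi.single j 1) = Cc j := by
    intro j; rw [Matrix.mulVec_single_one]; rfl
  have hFA : F * A = U * Cm := by
    ext i j
    have c1 : (F * A) i j = ((F * A).mulVec (Pi.single j 1)) i := by
      rw [Matrix.mulVec_single_one]; rfl
    have c2 : (U * Cm) i j = ((U * Cm).mulVec (Pi.single j 1)) i := by
      rw [Matrix.mulVec_single_one]; rfl
    rw [c1, c2, ← Matrix.mulVec_mulVec, ← Matrix.mulVec_mulVec, hCmcol, hCc]
  -- G * F is congruent to 1 modulo the range of A
  have hGFent : ∀ i j, e0 k ((G * F) i j) = (1 : Matrix (Fin 2) (Fin 2) k) i j := by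
    intro i j
    have hmem : (G * F).mulVec (Pi.single j 1) - Pi.single j 1
        ∈ LinearMap.range (Matrix.mulVecLin A) := by
      rw [← Submodule.Quotient.mk_eq_zero, Submodule.Quotient.mk_sub]
      rw [← Matrix.mulVec_mulVec, hGkey, hFkey, LinearEquiv.symm_apply_apply, sub_self]
    have := eps_range k A e0A _ hmem i
    simp only [Pi.sub_apply, map_sub] at this
    have h1 : ((G * F).mulVec (Pi.single j 1)) i = (G * F) i j := by
      rw [Matrix.mulVec_single_one]; rfl
    rw [h1] at this
    have h2 : e0 k ((Pi.single j 1 : Fin 2 → SRing k) i) = (1 : Matrix (Fin 2) (Fin 2) k) i j := by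
      rcases eq_or_ne i j with rfl | hij
      · simp [Matrix.one_apply]
      · simp [Pi.single_apply, hij, Matrix.one_apply, Ne.symm hij]
    rw [sub_eq_zero] at this
    rw [this, h2]
  -- F is invertible
  have hdetF : e0 k F.det ≠ 0 := by
    have hmapGF : (G * F).map (e0 k) = 1 := by
      ext i j; rw [Matrix.map_apply, hGFent]
    have h1 : e0 k ((G * F).det) = 1 := by
      rw [AlgHom.map_det, AlgHom.mapMatrix_apply, hmapGF, Matrix.det_one]
    rw [Matrix.det_mul, map_mul] at h1
    intro h0
    rw [h0, mul_zero] at h1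
    exact one_ne_zero h1.symm
  have hFunit : IsUnit F := by
    rw [Matrix.isUnit_iff_isUnit_det]
    exact isUnit_of_e0_ne k _ hdetF
  -- Cm is invertible : compare x-coefficients in F*A = U*Cm
  have key0 : ∀ i, e0 k (F i 0)
      = (dl k 0 (U i 0)).snd * e0 k (Cm 0 0) + (dl k 0 (U i 1)).snd * e0 k (Cm 1 0) := by
    intro i
    have t : (dl k 0 ((F * A) i 0)).snd = (dl k 0 ((U * Cm) i 0)).snd := by rw [hFA]
    rw [Matrix.mul_apply, Matrix.mul_apply, Fin.sum_univ_two, Fin.sum_univ_two] at t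
    have a0 : A 0 0 = sx k := rfl
    have a1 : A 1 0 = sy k := rfl
    rw [a0, a1] at t
    simpa only [map_add, map_mul, dl_sx0, dl_sy0, mul_zero, add_zero,
      TrivSqZeroExt.snd_add, DualNumber.snd_mul, DualNumber.fst_eps, DualNumber.snd_eps,
      mul_one, mul_zero, zero_mul, add_zero, zero_add, fst_dl, e0U,
      TrivSqZeroExt.snd_zero] using t
  have key1 : ∀ i, e0 k (F i 1)
      = (dl k 0 (U i 0)).snd * e0 k (Cm 0 1) + (dl k 0 (U i 1)).snd * e0 k (Cm 1 1) := by
    intro i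
    have t : (dl k 0 ((F * A) i 1)).snd = (dl k 0 ((U * Cm) i 1)).snd := by rw [hFA]
    rw [Matrix.mul_apply, Matrix.mul_apply, Fin.sum_univ_two, Fin.sum_univ_two] at t
    have a0 : A 0 1 = sz k := rfl
    have a1 : A 1 1 = sx k := rfl
    rw [a0, a1] at t
    simpa only [map_add, map_mul, dl_sx0, dl_sz0, mul_zero, add_zero,
      TrivSqZeroExt.snd_add, DualNumber.snd_mul, DualNumber.fst_eps, DualNumber.snd_eps,
      mul_one, mul_zero, zero_mul, add_zero, zero_add, fst_dl, e0U,
      TrivSqZeroExt.snd_zero] using t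
  have hmat : F.map (e0 k) = (U.map (fun g => (dl k 0 g).snd)) * (Cm.map (e0 k)) := by
    ext i j
    rw [Matrix.mul_apply, Fin.sum_univ_two]
    simp only [Matrix.map_apply]
    fin_cases j
    · exact key0 i
    · exact key1 i
  have hdetC : e0 k Cm.det ≠ 0 := by
    intro h0
    apply hdetF
    have hFm : (F.map (e0 k)).det = 0 := by
      rw [hmat, Matrix.det_mul]
      have : (Cm.map (e0 k)).det = 0 := by
        rw [← AlgHom.mapMatrix_apply, ← AlgHom.map_det, h0]
      rw [this, mul_zero]
    rw [AlgHom.map_det, AlgHom.mapMatrix_apply, hFm]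
  have hCunit : IsUnit Cm := (Matrix.isUnit_iff_isUnit_det Cm).mpr (isUnit_of_e0_ne k _ hdetC)
  have hQunit : IsUnit Cm⁻¹ := Matrix.isUnit_nonsing_inv_iff.mpr hCunit
  have hPAQ : F * A * Cm⁻¹ = U := by
    rw [hFA, Matrix.mul_assoc,
      Matrix.mul_nonsing_inv _ ((Matrix.isUnit_iff_isUnit_det Cm).mp hCunit), Matrix.mul_one]
  exact core k F Cm⁻¹ hFunit hQunit (by rw [← hA, hPAQ]; exact hU10)

end Aux13

/-- For a field `k` of characteristic `0` and `S = k[X,Y,Z]/(X²,Y²,Z²,YZ)` with maximal ideal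
`m = (x, y, z)`, the module `T = coker [[x, z], [y, x]]` is not isomorphic to the cokernel of
any `2×2` upper triangular matrix with entries in `m`; equivalently, there are no invertible
`2×2` matrices `P, Q` over `S` such that `P · [[x, z], [y, x]] · Q` is upper triangular. -/
theorem statement13 (k : Type) [Field k] [CharZero k] :
    (∀ U : Matrix (Fin 2) (Fin 2) (SRing k),
      (∀ i j : Fin 2, U i j ∈ Ideal.span ({sx k, sy k, sz k} : Set (SRing k))) →
      U 1 0 = 0 →
      ¬ Nonempty ((coker2 k !![sx k, sz k; sy k, sx k]) ≃ₗ[SRing k] coker2 k U)) ∧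
    (¬ ∃ P Q : Matrix (Fin 2) (Fin 2) (SRing k),
      IsUnit P ∧ IsUnit Q ∧ (P * !![sx k, sz k; sy k, sx k] * Q) 1 0 = 0) := by
  constructor
  · rintro U hU hU10 ⟨e⟩
    exact Aux13.part1 k U hU hU10 e
  · rintro ⟨P, Q, hP, hQ, h⟩
    exact Aux13.core k P Q hP hQ h
end
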